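/- arXiv:1903.02447 — 3 statements merged into one kernel-verified Lean document; each statement's English description precedes it below -/
import Mathlib

section
/- Let M be a median algebra with median operation m, and define the interval I(a,b) = {x ∈ M : m(a,x,b) = x}. Then for all u, v, x ∈ M and every y ∈ I(u,v), the point m(u,v,x) lies in I(x,y). (In other words, x ↦ m(u,v,x) is a gate projection onto the interval I(u,v).) -/
theorem median_gate_projection {M : Type*} (m : M → M → M → M)
    (habs : ∀ a b : M, m a a b = a)
    (hsym₁ : ∀ a b c : M, m a b c = m b a c)
    (hsym₂ : ∀ a b c : M, m a b c = m a c b)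
    (hassoc : ∀ a b c d : M, m (m a b c) d c = m a (m b d c) c)
    (I : M → M → Set M)
    (hI : ∀ a b : M, I a b = {x : M | m a x b = x}) :
    ∀ u v x y : M, y ∈ I u v → m u v x ∈ I x y := by
  intro u v x y hy
  rw [hI] at hy ⊢
  simp only [Set.mem_setOf_eq] at hy ⊢
  -- hy : m u y v = y ; goal : m x (m u v x) y = m u v x
  have key : ∀ a b c d : M, m a b (m a c d) = m a c (m a b d) := by
    intro a b c d
    have h := hassoc c d a b
    simp only [hsym₁, hsym₂] at h ⊢
    exact h
  have hfix : ∀ a b c : M, m a b (m a b c) = m a b c := by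
    intro a b c
    have h := hassoc c b a b
    simp only [habs, hsym₁, hsym₂] at h ⊢
    exact h
  have hy' : m u v y = y := by rw [hsym₂]; exact hy
  have s1 : m x (m u v x) y = m v x (m u x y) := by
    have h := hassoc v u x y
    simp only [hsym₁, hsym₂] at h ⊢
    exact h
  have s3 : m v x (m u x (m u v y)) = m v x (m u v (m u x y)) := by
    rw [key u x v y]
  have s4 : m v x (m u v (m u x y)) = m v (m u v x) (m u x y) := by
    have h := hassoc x u v (m u x y)
    simp only [hsym₁, hsym₂] at h ⊢
    exact h.symm
  have s6 : m u x (m u v y) = m u y (m u v x) := by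
    have h := key u x y v
    simp only [hsym₁, hsym₂] at h ⊢
    exact h
  have s7 : m v (m u v x) (m u y (m u v x)) = m y (m u v x) (m u v (m u v x)) := by
    have h1 := key (m u v x) v u y
    have h2 := key (m u v x) u y v
    simp only [hsym₁, hsym₂] at h1 h2 ⊢
    rw [h1, h2]
  calc m x (m u v x) y = m v x (m u x y) := s1
    _ = m v x (m u x (m u v y)) := by rw [hy']
    _ = m v x (m u v (m u x y)) := s3
    _ = m v (m u v x) (m u x y) := s4
    _ = m v (m u v x) (m u x (m u v y)) := by rw [hy']
    _ = m v (m u v x) (m u y (m u v x)) := by rw [s6]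
    _ = m y (m u v x) (m u v (m u v x)) := s7
    _ = m y (m u v x) (m u v x) := by rw [hfix u v x]
    _ = m u v x := by
        have h := habs (m u v x) y
        simp only [hsym₁, hsym₂] at h ⊢
        exact h
end

section
/- Let M be a median algebra with intervals I(a,b) = {x : m(a,x,b) = x}. Let x, y, z ∈ M and set p = m(x,y,z). Assume the 'opposite' condition I(x,y) ⊆ I(x,p) ∪ I(p,y). Then for every w ∈ M, either m(x, p, w) = p or m(y, p, w) = p; equivalently, p ∈ I(x,w) or p ∈ I(y,w). -/
private lemma median_key {M : Type*} (m : M → M → M → M)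
    (habs : ∀ a b : M, m a a b = a)
    (hsym₁ : ∀ a b c : M, m a b c = m b a c)
    (hsym₂ : ∀ a b c : M, m a b c = m a c b)
    (hassoc : ∀ a b c d : M, m (m a b c) d c = m a (m b d c) c)
    (x y p w : M) (hpxy : m x p y = p)
    (hq : m x (m x w y) p = m x w y) : m y p w = p := by
  set q := m x w y with hqdef
  set r := m p w y with hrdef
  -- r = m q p y
  have h2 : m q p y = r := by
    rw [hqdef, hassoc x w y p, hsym₁ w p y, ← hrdef]
    rw [hrdef, ← hassoc x p y w, hpxy]
  -- r = m x r p
  have h3 : r = m x r p := by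
    have := hassoc x q p y
    rw [hq] at this
    have hqyp : m q y p = r := by rw [hsym₂ q y p, h2]
    rw [hqyp] at this
    exact this
  -- m x r p = p
  have h4 : m x r p = p := by
    have hr' : r = m w y p := by rw [hrdef, hsym₁ p w y, hsym₂ w p y]
    have hyxp : m y x p = p := by rw [hsym₁ y x p, hsym₂ x y p, hpxy]
    have := hassoc w y p x
    rw [← hr', hyxp] at this
    rw [hsym₁ x r p, this, hsym₁ w p p, hsym₂ p w p, habs]
  have hrp : r = p := by rw [h3, h4]
  rw [show m y p w = r by rw [hrdef, hsym₁ y p w, hsym₂ p y w]]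
  exact hrp

theorem opposite_points_median {M : Type*} (m : M → M → M → M)
    (habs : ∀ a b : M, m a a b = a)
    (hsym₁ : ∀ a b c : M, m a b c = m b a c)
    (hsym₂ : ∀ a b c : M, m a b c = m a c b)
    (hassoc : ∀ a b c d : M, m (m a b c) d c = m a (m b d c) c)
    (I : M → M → Set M)
    (hI : ∀ a b : M, I a b = {x : M | m a x b = x})
    (x y z p : M) (hp : p = m x y z)
    (hop : I x y ⊆ I x p ∪ I p y) :
    ∀ w : M, p ∈ I x w ∨ p ∈ I y w := by
  have habs2 : ∀ a d c : M, m a (m a d c) c = m a d c := by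
    intro a d c
    have := hassoc a a c d
    rw [habs a c] at this
    exact this.symm
  have hpxy : m x p y = p := by
    rw [hp, hsym₂ x y z, habs2]
  intro w
  set q := m x w y with hqdef
  have hqmem : q ∈ I x y := by
    rw [hI]; exact habs2 x w y
  rcases hop hqmem with h | h
  · right
    rw [hI] at h ⊢
    simp only [Set.mem_setOf_eq] at h ⊢
    exact median_key m habs hsym₁ hsym₂ hassoc x y p w hpxy h
  · left
    rw [hI] at h ⊢
    simp only [Set.mem_setOf_eq] at h ⊢
    -- apply key with x and y swapped
    have hpyx : m y p x = p := by
      rw [hsym₁ y p x, hsym₂ p y x, hsym₁ p x y, hpxy]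
    have hq' : m y (m y w x) p = m y w x := by
      have hswap : m y w x = q := by
        rw [hqdef, hsym₁ y w x, hsym₂ w y x, hsym₁ w x y]
      rw [hswap]
      rw [show m y q p = m p q y by rw [hsym₁ y q p, hsym₂ q y p, hsym₁ q p y], h]
    exact median_key m habs hsym₁ hsym₂ hassoc y x p w hpyx hq'
end

section
/- Let g be a bijection of a set X and let S ⊆ X be a finite subset. Then there exists an integer n ≥ 1 such that for every s ∈ S with gⁿ(s) ∈ S, one has gⁿ(s) = s. Equivalently, every element of S ∩ gⁿ(S) is fixed by gⁿ. -/
theorem exists_power_fixing_finite_intersection {X : Type*} (g : X ≃ X) (S : Finset X) :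
    ∃ n : ℕ, 1 ≤ n ∧ ∀ s ∈ S, (⇑g)^[n] s ∈ S → (⇑g)^[n] s = s := by
  classical
  set P : Finset X := S.filter (fun s => ∃ p, 1 ≤ p ∧ (⇑g)^[p] s = s) with hPdef
  choose p hp1 hp2 using fun (s : X) (hs : s ∈ P) => (Finset.mem_filter.mp hs).2
  set N : ℕ := P.attach.prod (fun s => p s.1 s.2) with hNdef
  have hN1 : 1 ≤ N := Finset.one_le_prod' fun s _ => hp1 s.1 s.2
  have hNfix : ∀ s ∈ P, ∀ c : ℕ, (⇑g)^[N * c] s = s := by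
    intro s hs c
    obtain ⟨d, hd⟩ : p s hs ∣ N :=
      Finset.dvd_prod_of_mem _ (Finset.mem_attach _ ⟨s, hs⟩)
    rw [hd, mul_assoc, Function.iterate_mul]
    exact Function.iterate_fixed (hp2 s hs) (d * c)
  have hfin : ∀ s ∈ S, s ∉ P → {k : ℕ | (⇑g)^[k] s ∈ S}.Finite := by
    intro s hs hsP
    have key : ∀ a b : ℕ, a < b → (⇑g)^[a] s = (⇑g)^[b] s → False := by
      intro a b hlt hab
      have h1 : (⇑g)^[a] ((⇑g)^[b - a] s) = (⇑g)^[a] s := by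
        rw [← Function.iterate_add_apply]
        have hb : a + (b - a) = b := by omega
        rw [hb]; exact hab.symm
      have h2 : (⇑g)^[b - a] s = s :=
        (Function.Injective.iterate g.injective a) h1
      exact hsP (Finset.mem_filter.mpr ⟨hs, b - a, by omega, h2⟩)
    have hinj : Function.Injective (fun k : ℕ => (⇑g)^[k] s) := by
      intro a b hab
      rcases lt_trichotomy a b with h | h | h
      · exact absurd (key a b h hab) not_false
      · exact h
      · exact absurd (key b a h hab.symm) not_false
    exact Set.Finite.preimage hinj.injOn S.finite_toSet
  have hbig : (⋃ s ∈ S.filter (· ∉ P), {k : ℕ | (⇑g)^[k] s ∈ S}).Finite := by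
    apply Set.Finite.biUnion (S.filter (· ∉ P)).finite_toSet
    intro s hs
    simp only [Finset.coe_filter, Set.mem_setOf_eq] at hs
    exact hfin s hs.1 hs.2
  obtain ⟨B, hB⟩ := hbig.bddAbove
  refine ⟨N * (B + 1), Nat.one_le_iff_ne_zero.mpr (by positivity), ?_⟩
  intro s hs hgs
  by_cases hsP : s ∈ P
  · exact hNfix s hsP (B + 1)
  · exfalso
    have hmem : N * (B + 1) ∈ ⋃ s ∈ S.filter (· ∉ P), {k : ℕ | (⇑g)^[k] s ∈ S} := by
      exact Set.mem_biUnion (Finset.mem_coe.mpr (Finset.mem_filter.mpr ⟨hs, hsP⟩)) hgs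
    have h1 := hB hmem
    have h2 : B + 1 ≤ N * (B + 1) := Nat.le_mul_of_pos_left _ hN1
    omega
end
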